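/- Let (V, ⪯) be a finite partial order with greatest element ⊤. The system of principal upper sets {A(v) : v ∈ V} is closed under nonempty intersections if and only if the system of intervals {B(u,v) : u,v ∈ V}, where B(u,v) = {w : v ⪯ w ⪯ u}, is closed under nonempty intersections. -/

import Mathlib

/-- For a finite poset with greatest element, the ancestor system (principal
upper sets) is closed under nonempty intersections iff the intermediary system
(intervals `B(u,v) = {w : v ⪯ w ⪯ u}`) is closed under nonempty intersections. -/
theorem ancestor_closed_iff_intermediary_closed {V : Type*} [Fintype V]
    [PartialOrder V] [OrderTop V] :
    (∀ u v : V, (Set.Ici u ∩ Set.Ici v).Nonempty →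
      ∃ w : V, Set.Ici u ∩ Set.Ici v = Set.Ici w) ↔
    (∀ a b c d : V, (Set.Icc a b ∩ Set.Icc c d).Nonempty →
      ∃ p q : V, Set.Icc a b ∩ Set.Icc c d = Set.Icc p q) := by
  constructor
  · intro h a b c d hne
    obtain ⟨x, hxab, hxcd⟩ := hne
    have hj : ∀ u v : V, ∃ w, u ≤ w ∧ v ≤ w ∧ ∀ z, u ≤ z → v ≤ z → w ≤ z := by
      intro u v
      obtain ⟨w, hw⟩ := h u v ⟨⊤, le_top, le_top⟩
      have hwm : w ∈ Set.Ici u ∩ Set.Ici v := hw ▸ Set.self_mem_Ici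
      refine ⟨w, hwm.1, hwm.2, fun z hz1 hz2 => ?_⟩
      have : z ∈ Set.Ici w := hw ▸ Set.mem_inter hz1 hz2
      exact this
    set S := Set.Icc a b ∩ Set.Icc c d with hS
    have hSclosed : ∀ x ∈ S, ∀ y ∈ S, ∃ z ∈ S, x ≤ z ∧ y ≤ z := by
      intro x hx y hy
      obtain ⟨z, hxz, hyz, hlub⟩ := hj x y
      exact ⟨z, ⟨⟨le_trans hx.1.1 hxz, hlub b hx.1.2 hy.1.2⟩,
        ⟨le_trans hx.2.1 hxz, hlub d hx.2.2 hy.2.2⟩⟩, hxz, hyz⟩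
    obtain ⟨q, hqS, hqmax⟩ : ∃ q ∈ S, ∀ z ∈ S, q ≤ z → q = z := by
      obtain ⟨q, hqS, hm⟩ := Set.Finite.exists_maximalFor id S (Set.toFinite S) ⟨x, hxab, hxcd⟩
      exact ⟨q, hqS, fun z hz hqz => le_antisymm hqz (hm hz hqz)⟩
    have hqtop : ∀ y ∈ S, y ≤ q := by
      intro y hy
      obtain ⟨z, hzS, hqz, hyz⟩ := hSclosed q hqS y hy
      have hzq : q = z := hqmax z hzS hqz
      exact hzq ▸ hyz
    obtain ⟨w, haw, hcw, hwlub⟩ := hj a c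
    refine ⟨w, q, Set.ext fun y => ⟨fun hy => ?_, fun hy => ?_⟩⟩
    · exact ⟨hwlub y hy.1.1 hy.2.1, hqtop y hy⟩
    · exact ⟨⟨le_trans haw hy.1, le_trans hy.2 hqS.1.2⟩,
        ⟨le_trans hcw hy.1, le_trans hy.2 hqS.2.2⟩⟩
  · intro h u v _
    obtain ⟨p, q, hpq⟩ := h u ⊤ v ⊤ ⟨⊤, ⟨le_top, le_refl _⟩, ⟨le_top, le_refl _⟩⟩
    have htop : (⊤ : V) ∈ Set.Icc p q :=
      hpq ▸ Set.mem_inter ⟨le_top, le_refl _⟩ ⟨le_top, le_refl _⟩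
    have hq : q = ⊤ := le_antisymm le_top htop.2
    refine ⟨p, ?_⟩
    rw [← Set.Icc_top, ← Set.Icc_top (a := v), hpq, hq, Set.Icc_top, Set.Ici]
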